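/- Let s, s_j : ℝ → ℝ² (j = 1, …, M) and v, ω, v_j, ω_j : ℝ → ℝ³ be differentiable, let K̄ ∈ ℝ, and let κ : ℝ → ℝ be differentiable. For each j define θ_j(t) = (x_j(t), y_j(t), −(x_j(t)² + y_j(t)²)/2) where s_j = (x_j, y_j). Define the depth estimate χ̂(t) = κ(t) − K̄·Σ_{j=1}^{M} ⟨θ_j(t), v_j(t)⟩ and suppose κ satisfies κ'(t) = f_u(s(t), χ̂(t), v(t), ω(t)) + K̄·Σ_{j=1}^{M} ( ⟨θ_j(t), v_j'(t)⟩ − ⟨Ω(s_j(t), v_j(t)), f_m(s_j(t), ω_j(t))⟩ − ‖Ω(s_j(t), v_j(t))‖²·χ̂(t) ). Then χ̂ is differentiable and satisfies χ̂'(t) = f_u(s(t), χ̂(t), v(t), ω(t)) + K̄·Σ_{j=1}^{M} ⟨Ω(s_j(t), v_j(t)), s_j'(t) − f_m(s_j(t), ω_j(t)) − χ̂(t)·Ω(s_j(t), v_j(t))⟩. -/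

import Mathlib

open scoped InnerProductSpace

noncomputable section

abbrev E2 := EuclideanSpace ℝ (Fin 2)
abbrev E3 := EuclideanSpace ℝ (Fin 3)

/-- `f_m(s, ω)` of the perspective dynamical system. -/
def fm (s : E2) (w : E3) : E2 :=
  WithLp.toLp 2 ![s 0 * s 1 * w 0 - (1 + s 0 ^ 2) * w 1 + s 1 * w 2,
    (1 + s 1 ^ 2) * w 0 - s 0 * s 1 * w 1 - s 0 * w 2]

/-- The regressor `Ω(s, v)`. -/
def Omg (s : E2) (v : E3) : E2 := WithLp.toLp 2 ![s 0 * v 2 - v 0, s 1 * v 2 - v 1]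

/-- Inverse-depth dynamics `f_u(s, χ, v, ω)`. -/
def fu (s : E2) (χ : ℝ) (v w : E3) : ℝ :=
  v 2 * χ ^ 2 + (s 1 * w 0 - s 0 * w 1) * χ

/-- `θ_j(t) = (x_j, y_j, −(x_j² + y_j²)/2)`. -/
def theta (s : E2) : E3 := WithLp.toLp 2 ![s 0, s 1, -(s 0 ^ 2 + s 1 ^ 2) / 2]

lemma proj_deriv {n : ℕ} (f : ℝ → EuclideanSpace ℝ (Fin n)) (f'' : EuclideanSpace ℝ (Fin n))
    (i : Fin n) (t : ℝ) (h : HasDerivAt f f'' t) : HasDerivAt (fun u => f u i) (f'' i) t := by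
  exact (EuclideanSpace.proj i).hasFDerivAt.comp_hasDerivAt t h

/-- The reduced-order concurrent-learning observer `χ̂ = κ + γ` with
`γ = −K̄·Σ_j ⟨θ_j, v_j⟩` obeys the implemented observer dynamics without requiring
measurement of `ṡ`. -/
theorem reduced_order_observer_dynamics
    (M : ℕ) (s : ℝ → E2) (v ω : ℝ → E3)
    (sj : Fin M → ℝ → E2) (vj ωj : Fin M → ℝ → E3)
    (sj' : Fin M → ℝ → E2) (vj' ωj' : Fin M → ℝ → E3)
    (s' : ℝ → E2) (v' ω' : ℝ → E3)
    (hs : ∀ t, HasDerivAt s (s' t) t)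
    (hv : ∀ t, HasDerivAt v (v' t) t)
    (hω : ∀ t, HasDerivAt ω (ω' t) t)
    (hsj : ∀ j t, HasDerivAt (sj j) (sj' j t) t)
    (hvj : ∀ j t, HasDerivAt (vj j) (vj' j t) t)
    (hωj : ∀ j t, HasDerivAt (ωj j) (ωj' j t) t)
    (Kbar : ℝ) (κ χhat : ℝ → ℝ)
    (hκdiff : Differentiable ℝ κ)
    (hχhat : ∀ t, χhat t = κ t - Kbar * ∑ j, ⟪theta (sj j t), vj j t⟫_ℝ)
    (hκ : ∀ t, HasDerivAt κ
      (fu (s t) (χhat t) (v t) (ω t)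
        + Kbar * ∑ j, (⟪theta (sj j t), vj' j t⟫_ℝ
            - ⟪Omg (sj j t) (vj j t), fm (sj j t) (ωj j t)⟫_ℝ
            - ‖Omg (sj j t) (vj j t)‖ ^ 2 * χhat t)) t) :
    ∀ t, HasDerivAt χhat
      (fu (s t) (χhat t) (v t) (ω t)
        + Kbar * ∑ j, ⟪Omg (sj j t) (vj j t),
            sj' j t - fm (sj j t) (ωj j t) - χhat t • Omg (sj j t) (vj j t)⟫_ℝ) t := by
  intro t
  -- derivative of each inner product term
  have hg : ∀ j : Fin M, HasDerivAt (fun u => ⟪theta (sj j u), vj j u⟫_ℝ)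
      (sj' j t 0 * vj j t 0 + sj j t 0 * vj' j t 0
        + (sj' j t 1 * vj j t 1 + sj j t 1 * vj' j t 1)
        + (-(2 * sj j t 0 ^ 1 * sj' j t 0 + 2 * sj j t 1 ^ 1 * sj' j t 1) / 2 * vj j t 2
            + -(sj j t 0 ^ 2 + sj j t 1 ^ 2) / 2 * vj' j t 2)) t := by
    intro j
    have hX := proj_deriv (sj j) (sj' j t) 0 t (hsj j t)
    have hY := proj_deriv (sj j) (sj' j t) 1 t (hsj j t)
    have hV0 := proj_deriv (vj j) (vj' j t) 0 t (hvj j t)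
    have hV1 := proj_deriv (vj j) (vj' j t) 1 t (hvj j t)
    have hV2 := proj_deriv (vj j) (vj' j t) 2 t (hvj j t)
    have h1 := ((hX.mul hV0).add (hY.mul hV1)).add
      ((((hX.pow 2).add (hY.pow 2)).neg.div_const 2).mul hV2)
    have heq : (fun u => ⟪theta (sj j u), vj j u⟫_ℝ)
        = fun u => sj j u 0 * vj j u 0 + sj j u 1 * vj j u 1
            + -(sj j u 0 ^ 2 + sj j u 1 ^ 2) / 2 * vj j u 2 := by
      funext u
      simp [theta, PiLp.inner_apply, Fin.sum_univ_three]
      ring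
    rw [heq]
    refine h1.congr_deriv ?_
    norm_num [Pi.neg_apply, Pi.add_apply, Pi.pow_apply]
  have hsum := HasDerivAt.fun_sum (fun j (_ : j ∈ Finset.univ) => hg j)
  have key := (hκ t).fun_sub (hsum.const_mul Kbar)
  have hfe : χhat = fun u => κ u - Kbar * ∑ j, ⟪theta (sj j u), vj j u⟫_ℝ := funext hχhat
  beta_reduce at key
  rw [← hfe] at key
  refine key.congr_deriv ?_
  rw [add_sub_assoc, ← mul_sub, ← Finset.sum_sub_distrib]
  congr 1
  congr 1
  apply Finset.sum_congr rfl
  intro j _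
  simp only [PiLp.inner_apply, RCLike.inner_apply, conj_trivial, Fin.sum_univ_two,
    Fin.sum_univ_three, PiLp.sub_apply, PiLp.smul_apply, smul_eq_mul,
    ← real_inner_self_eq_norm_sq, Omg, theta, fm, Matrix.cons_val_zero, Matrix.cons_val_one,
    Matrix.head_cons, Matrix.cons_val_two, Matrix.tail_cons]
  ring
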